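/- Consider ℤ with length function ℓ(n) = α|n|, α > 0. Using the circle arclength length ℓ^{arc}(e^{iθ}) = min_{k∈ℤ}|θ+2πk| on U(1), the double-dual length restricted to one-dimensional representations (characters) satisfies: sup over characters χ_x(n) = e^{inx}, x ∈ (0,2π), of ℓ^{arc}(e^{inx})·α/ℓ^{arc}(e^{ix}) = α|n| for every integer n. In particular, the double-dual length of ℤ with respect to characters equals ℓ. -/

import Mathlib

open Real

/-- arclength distance from `1` to `e^{iθ}` on the unit circle. -/
noncomputable def larc (θ : ℝ) : ℝ := ⨅ k : ℤ, |θ + 2 * Real.pi * k|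

lemma larc_bdd (θ : ℝ) : BddBelow (Set.range fun k : ℤ => |θ + 2 * Real.pi * k|) :=
  ⟨0, by rintro y ⟨k, rfl⟩; exact abs_nonneg _⟩

lemma larc_le (θ : ℝ) (k : ℤ) : larc θ ≤ |θ + 2 * Real.pi * k| :=
  ciInf_le (larc_bdd θ) k

lemma larc_nonneg (θ : ℝ) : 0 ≤ larc θ :=
  le_ciInf fun k => abs_nonneg _

lemma larc_eq_abs {θ : ℝ} (h : |θ| ≤ Real.pi) : larc θ = |θ| := by
  apply le_antisymm
  · have := larc_le θ 0
    simpa using this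
  · apply le_ciInf
    intro k
    rcases eq_or_ne k 0 with rfl | hk
    · simp
    · have hk1 : (1:ℝ) ≤ |(k:ℝ)| := by
        have := Int.one_le_abs hk
        exact_mod_cast this
      have h2 : 2 * Real.pi ≤ |2 * Real.pi * k| := by
        rw [abs_mul, abs_of_nonneg (by positivity : (0:ℝ) ≤ 2 * Real.pi)]
        nlinarith [Real.pi_pos]
      have h3 : |2 * Real.pi * (k:ℝ)| ≤ |θ + 2 * Real.pi * k| + |θ| := by
        calc |2 * Real.pi * (k:ℝ)| = |(θ + 2 * Real.pi * k) + (-θ)| := by ring_nf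
        _ ≤ |θ + 2 * Real.pi * k| + |(-θ)| := abs_add_le _ _
        _ = |θ + 2 * Real.pi * k| + |θ| := by rw [abs_neg]
      linarith

lemma larc_pos {x : ℝ} (hx0 : 0 < x) (hx2 : x < 2 * Real.pi) : 0 < larc x := by
  have hmin : min x (2 * Real.pi - x) ≤ larc x := by
    apply le_ciInf
    intro k
    rcases le_or_gt 0 k with hk | hk
    · have hk' : (0:ℝ) ≤ (k:ℝ) := by exact_mod_cast hk
      calc min x (2 * Real.pi - x) ≤ x := min_le_left _ _
      _ ≤ x + 2 * Real.pi * k := by nlinarith [Real.pi_pos]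
      _ ≤ |x + 2 * Real.pi * k| := le_abs_self _
    · have hki : k ≤ -1 := by omega
      have hk' : (k:ℝ) ≤ -1 := by exact_mod_cast hki
      calc min x (2 * Real.pi - x) ≤ 2 * Real.pi - x := min_le_right _ _
      _ ≤ -(x + 2 * Real.pi * k) := by nlinarith [Real.pi_pos]
      _ ≤ |x + 2 * Real.pi * k| := neg_le_abs _
  have : 0 < min x (2 * Real.pi - x) := lt_min hx0 (by linarith)
  linarith

lemma larc_int_mul_le (n : ℤ) (x : ℝ) : larc ((n:ℝ) * x) ≤ |(n:ℝ)| * larc x := by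
  rcases eq_or_ne n 0 with rfl | hn
  · simp [larc_eq_abs (by simp [Real.pi_pos.le] : |(0:ℝ)| ≤ Real.pi)]
  · have hn' : (0:ℝ) < |(n:ℝ)| := by
      simp only [abs_pos]
      exact_mod_cast hn
    rw [show |(n:ℝ)| * larc x = larc x * |(n:ℝ)| from mul_comm _ _, ← div_le_iff₀ hn']
    apply le_ciInf
    intro k
    rw [div_le_iff₀ hn']
    calc larc ((n:ℝ) * x) ≤ |(n:ℝ) * x + 2 * Real.pi * (n * k : ℤ)| := larc_le _ (n * k)
    _ = |(n:ℝ)| * |x + 2 * Real.pi * k| := by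
        rw [← abs_mul]; push_cast; ring_nf
    _ = |x + 2 * Real.pi * k| * |(n:ℝ)| := mul_comm _ _

/-- for `ℤ` with length `ℓ(n) = α|n|`, `α > 0`, the double-dual length
computed over the characters `χ_x(n) = e^{inx}`, `x ∈ (0,2π)`, equals `ℓ`:
`sup_x ℓ^{arc}(e^{inx})·α/ℓ^{arc}(e^{ix}) = α|n|` for every `n ∈ ℤ`. -/
theorem Ldd_int_characters (α : ℝ) (hα : 0 < α) (n : ℤ) :
    (⨆ x : Set.Ioo (0:ℝ) (2 * Real.pi),
        larc ((n : ℝ) * (x : ℝ)) * α / larc (x : ℝ)) = α * |(n : ℝ)| := by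
  have hπ := Real.pi_pos
  have hne : Nonempty (Set.Ioo (0:ℝ) (2 * Real.pi)) :=
    ⟨⟨Real.pi, by constructor <;> nlinarith⟩⟩
  have hub : ∀ x : Set.Ioo (0:ℝ) (2 * Real.pi),
      larc ((n : ℝ) * (x : ℝ)) * α / larc (x : ℝ) ≤ α * |(n : ℝ)| := by
    rintro ⟨x, hx0, hx2⟩
    have hlx : 0 < larc x := larc_pos hx0 hx2
    rw [div_le_iff₀ hlx]
    have := larc_int_mul_le n x
    nlinarith [larc_nonneg ((n:ℝ) * x)]
  rcases eq_or_ne n 0 with rfl | hn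
  · have h0 : ∀ x : Set.Ioo (0:ℝ) (2 * Real.pi),
        larc (((0:ℤ) : ℝ) * (x : ℝ)) * α / larc (x : ℝ) = 0 := by
      intro x
      have : larc 0 = 0 := by
        simpa using larc_eq_abs (by simp [Real.pi_pos.le] : |(0:ℝ)| ≤ Real.pi)
      simp [this]
    rw [iSup_congr h0]
    simp
  · apply le_antisymm
    · exact ciSup_le hub
    · have hn1 : (1:ℤ) ≤ |n| := Int.one_le_abs hn
      have hn1' : (1:ℝ) ≤ |(n:ℝ)| := by exact_mod_cast hn1
      have hnpos : (0:ℝ) < |(n:ℝ)| := by linarith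
      set x : ℝ := Real.pi / |(n:ℝ)| with hxdef
      have hx0 : 0 < x := by positivity
      have hxle : x ≤ Real.pi := by
        rw [hxdef, div_le_iff₀ hnpos]; nlinarith
      have hx2 : x < 2 * Real.pi := by linarith
      have hlx : larc x = x := by
        rw [larc_eq_abs (by rw [abs_of_pos hx0]; exact hxle)]
        exact abs_of_pos hx0
      have hnx : |(n:ℝ) * x| = Real.pi := by
        rw [abs_mul, abs_of_pos hx0, hxdef]
        field_simp
      have hlnx : larc ((n:ℝ) * x) = Real.pi := by
        rw [larc_eq_abs (le_of_eq hnx), hnx]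
      have hval : larc ((n:ℝ) * x) * α / larc x = α * |(n:ℝ)| := by
        rw [hlnx, hlx, hxdef]
        field_simp
      calc α * |(n:ℝ)| = larc ((n:ℝ) * x) * α / larc x := hval.symm
      _ ≤ _ := le_ciSup ⟨α * |(n:ℝ)|, by rintro y ⟨z, rfl⟩; exact hub z⟩
            (⟨x, hx0, hx2⟩ : Set.Ioo (0:ℝ) (2 * Real.pi))
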